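/- Fix an integer n ≥ 1 and λ > 0. Let G₁ and G₂ be independent, each distributed according to the gamma distribution with shape 1/n and scale λ. Then E|G₁ − G₂| = 2λ / B(1/2, 1/n), where B(x, y) = Γ(x)Γ(y)/Γ(x+y) is the beta function. -/

import Mathlib

open MeasureTheory ProbabilityTheory Real
open Set intervalIntegral


lemma auxJ (k : ℝ) (hk : 0 < k) :
    ∫ v in (0:ℝ)..1, (1 - v) * v ^ (k - 1) * (1 + v) ^ (-(2 * k + 1)) = (4:ℝ) ^ (-k) / k := by
  have key : ∫ v in (0:ℝ)..1, k * ((1 - v) * v ^ (k - 1) * (1 + v) ^ (-(2 * k + 1)))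
      = (4:ℝ) ^ (-k) := by
    have hcont : ContinuousOn (fun v : ℝ => v ^ k * (1 + v) ^ (-(2 * k))) (Icc 0 1) := by
      apply ContinuousOn.mul
      · intro v hv
        exact (Real.continuousAt_rpow_const v k (Or.inr hk.le)).continuousWithinAt
      · intro v hv
        apply ContinuousWithinAt.rpow_const
        · exact (continuous_const.add continuous_id).continuousWithinAt
        · left; intro h; simp only [mem_Icc] at hv; nlinarith [hv.1]
    have hderiv : ∀ v ∈ Ioo (0:ℝ) 1, HasDerivAt (fun v : ℝ => v ^ k * (1 + v) ^ (-(2 * k)))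
        (k * ((1 - v) * v ^ (k - 1) * (1 + v) ^ (-(2 * k + 1)))) v := by
      intro v hv
      obtain ⟨hv0, hv1⟩ := hv
      have h1v : (0:ℝ) < 1 + v := by linarith
      have d1 : HasDerivAt (fun v : ℝ => v ^ k) (k * v ^ (k - 1)) v :=
        Real.hasDerivAt_rpow_const (Or.inl hv0.ne')
      have d2 : HasDerivAt (fun v : ℝ => (1 + v) ^ (-(2 * k)))
          ((-(2 * k)) * (1 + v) ^ (-(2 * k) - 1)) v := by
        have := (Real.hasDerivAt_rpow_const (p := -(2*k)) (Or.inl h1v.ne')).comp v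
          ((hasDerivAt_id v).const_add 1)
        simpa [Function.comp_def] using this
      have := d1.mul d2
      refine this.congr_deriv ?_
      have hvk : v ^ k = v ^ (k-1) * v := by
        rw [← Real.rpow_add_one hv0.ne']; ring_nf
      have h2 : (1 + v) ^ (-(2 * k) - 1) = (1+v) ^ (-(2*k+1)) := by ring_nf
      have h3 : (1 + v) ^ (-(2 * k)) = (1+v) ^ (-(2*k+1)) * (1+v) := by
        rw [← Real.rpow_add_one h1v.ne']; ring_nf
      rw [hvk, h2, h3]; ring
    have hint : IntervalIntegrable
        (fun v : ℝ => k * ((1 - v) * v ^ (k - 1) * (1 + v) ^ (-(2 * k + 1)))) volume 0 1 := by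
      have h1 : IntervalIntegrable (fun v : ℝ => v ^ (k - 1)) volume 0 1 :=
        intervalIntegral.intervalIntegrable_rpow' (by linarith)
      have h2 : ContinuousOn (fun v : ℝ => k * ((1 - v) * (1 + v) ^ (-(2 * k + 1))))
          (Set.uIcc 0 1) := by
        apply ContinuousOn.mul continuousOn_const
        apply ContinuousOn.mul (by fun_prop)
        intro v hv
        apply ContinuousWithinAt.rpow_const
          ((continuous_const.add continuous_id).continuousWithinAt)
        left; intro h
        rw [Set.uIcc_of_le (by norm_num : (0:ℝ) ≤ 1)] at hv
        have := hv.1; simp only [Pi.add_apply, id] at h; nlinarith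
      have h3 := h1.continuousOn_mul h2
      have heq : (fun v : ℝ => k * ((1 - v) * (1 + v) ^ (-(2 * k + 1))) * v ^ (k - 1))
          = fun v : ℝ => k * ((1 - v) * v ^ (k - 1) * (1 + v) ^ (-(2 * k + 1))) := by
        funext v; ring
      rwa [heq] at h3
    have := intervalIntegral.integral_eq_sub_of_hasDeriv_right_of_le (by norm_num) hcont
      (fun v hv => (hderiv v hv).hasDerivWithinAt) hint
    rw [this, Real.one_rpow, Real.zero_rpow hk.ne', one_mul, zero_mul, sub_zero,
      show (1:ℝ) + 1 = 2 by norm_num,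
      show (4:ℝ) = (2:ℝ) ^ (2:ℝ) by
        rw [show (2:ℝ) = ((2:ℕ):ℝ) by norm_num, Real.rpow_natCast]; norm_num,
      ← Real.rpow_mul (by norm_num : (0:ℝ) ≤ 2)]
    ring_nf
  rw [intervalIntegral.integral_const_mul] at key
  field_simp [hk.ne'] at key ⊢
  linarith [key]
lemma auxSub (k r x : ℝ) (hx : 0 < x) :
    ∫ y in (0:ℝ)..x, (x - y) * (y ^ (k-1) * Real.exp (-(r*y)))
      = x ^ (k+1) * ∫ v in (0:ℝ)..1, (1-v) * v ^ (k-1) * Real.exp (-(r*(x*v))) := by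
  have h := intervalIntegral.smul_integral_comp_mul_left
    (fun y => (x - y) * (y ^ (k-1) * Real.exp (-(r*y)))) x (a := 0) (b := 1)
  rw [mul_zero, mul_one] at h
  rw [← h, smul_eq_mul]
  have hcong : ∫ v in (0:ℝ)..1, (x - x*v) * ((x*v) ^ (k-1) * Real.exp (-(r*(x*v))))
      = ∫ v in (0:ℝ)..1, x ^ k * ((1-v) * v ^ (k-1) * Real.exp (-(r*(x*v)))) := by
    apply intervalIntegral.integral_congr
    intro v hv
    rw [Set.uIcc_of_le (by norm_num : (0:ℝ) ≤ 1)] at hv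
    have hv0 : 0 ≤ v := hv.1
    have hmul : (x*v) ^ (k-1) = x ^ (k-1) * v ^ (k-1) := Real.mul_rpow hx.le hv0
    have hxk : x ^ k = x ^ (k-1) * x := by rw [← Real.rpow_add_one hx.ne']; ring_nf
    simp only
    rw [hmul, hxk]; ring
  rw [hcong, intervalIntegral.integral_const_mul, ← mul_assoc, Real.rpow_add_one hx.ne']
  ring

lemma auxI1 (a b : ℝ) (ha : 0 < a) (hb : 0 < b) :
    IntegrableOn (fun x : ℝ => x ^ (a-1) * Real.exp (-(b*x))) (Ioi 0) := by
  have h := integrableOn_rpow_mul_exp_neg_mul_rpow (s := a-1) (p := 1) (b := b)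
    (by linarith) zero_lt_one hb
  apply h.congr_fun ?_ measurableSet_Ioi
  intro y hy
  simp [Real.rpow_one, neg_mul]

lemma auxII (k r x : ℝ) (hk : 0 < k) :
    IntervalIntegrable (fun y : ℝ => (x - y) * (y ^ (k-1) * Real.exp (-(r*y)))) volume 0 x := by
  have h1 : IntervalIntegrable (fun y : ℝ => y ^ (k-1)) volume 0 x :=
    intervalIntegral.intervalIntegrable_rpow' (by linarith)
  have h2 : ContinuousOn (fun y : ℝ => (x - y) * Real.exp (-(r*y))) (Set.uIcc 0 x) := by
    fun_prop
  have h3 := h1.continuousOn_mul h2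
  have heq : (fun y : ℝ => (x - y) * Real.exp (-(r*y)) * y ^ (k-1))
      = fun y : ℝ => (x - y) * (y ^ (k-1) * Real.exp (-(r*y))) := by funext y; ring
  rwa [heq] at h3

lemma ofReal_eq_ofReal_max (t : ℝ) : ENNReal.ofReal t = ENNReal.ofReal (max t 0) := by
  rcases le_total t 0 with h | h
  · rw [ENNReal.ofReal_of_nonpos h, max_eq_right h, ENNReal.ofReal_zero]
  · rw [max_eq_left h]

lemma inner_pos (k r x : ℝ) (hk : 0 < k) (hr : 0 < r) (hx : 0 < x) :
    ∫⁻ y, gammaPDF k r y * ENNReal.ofReal (x - y)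
      = ENNReal.ofReal (r ^ k / Real.Gamma k *
          (x ^ (k+1) * ∫ v in (0:ℝ)..1, (1-v) * v ^ (k-1) * Real.exp (-(r*(x*v))))) := by
  set C : ℝ := r ^ k / Real.Gamma k with hC
  have hCpos : 0 < C := div_pos (Real.rpow_pos_of_pos hr k) (Real.Gamma_pos_of_pos hk)
  set h : ℝ → ℝ := fun y => gammaPDFReal k r y * max (x - y) 0 with hh
  have hcongr : ∀ y, gammaPDF k r y * ENNReal.ofReal (x - y) = ENNReal.ofReal (h y) := by
    intro y
    rw [gammaPDF, ofReal_eq_ofReal_max (x - y),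
      ← ENNReal.ofReal_mul (gammaPDFReal_nonneg hk hr y)]
  have hIoc : IntegrableOn h (Ioc 0 x) := by
    have h3 := (auxII k r x hk).1
    have h4 : IntegrableOn (fun y : ℝ => C * ((x - y) * (y ^ (k-1) * Real.exp (-(r*y))))) (Ioc 0 x) volume := h3.const_mul C
    apply h4.congr_fun ?_ measurableSet_Ioc
    intro y hy
    simp only [hh, gammaPDFReal, if_pos hy.1.le, max_eq_left (by linarith [hy.2] : (0:ℝ) ≤ x - y)]
    ring
  have haeeq : (Set.indicator (Ioc 0 x) h) =ᵐ[volume] h := by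
    have h0 : ∀ᵐ y : ℝ ∂volume, y ≠ 0 := by
      rw [MeasureTheory.ae_iff]
      simpa using Real.volume_singleton
    filter_upwards [h0] with y hy0
    rcases le_or_gt y 0 with hy | hy
    · have hvy : y < 0 := lt_of_le_of_ne hy hy0
      rw [Set.indicator_of_notMem (by simp [hvy.not_ge, Set.mem_Ioc]; intro h'; linarith)]
      simp [hh, gammaPDFReal, if_neg (not_le.mpr hvy)]
    · rcases le_or_gt y x with hyx | hyx
      · rw [Set.indicator_of_mem (Set.mem_Ioc.mpr ⟨hy, hyx⟩)]
      · rw [Set.indicator_of_notMem (by simp [Set.mem_Ioc]; intro h'; linarith)]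
        simp [hh, max_eq_right (by linarith : x - y ≤ 0)]
  have hInt : Integrable h := by
    have := (integrable_indicator_iff measurableSet_Ioc).mpr hIoc
    exact this.congr haeeq
  have hnn : 0 ≤ᵐ[volume] h :=
    ae_of_all _ fun y => mul_nonneg (gammaPDFReal_nonneg hk hr y) (le_max_right _ _)
  calc ∫⁻ y, gammaPDF k r y * ENNReal.ofReal (x - y)
      = ∫⁻ y, ENNReal.ofReal (h y) := by exact lintegral_congr hcongr
    _ = ENNReal.ofReal (∫ y, h y) := (ofReal_integral_eq_lintegral_ofReal hInt hnn).symm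
    _ = _ := by
        congr 1
        rw [← integral_congr_ae haeeq, MeasureTheory.integral_indicator measurableSet_Ioc,
          ← intervalIntegral.integral_of_le hx.le]
        have : ∫ y in (0:ℝ)..x, h y
            = ∫ y in (0:ℝ)..x, C * ((x - y) * (y ^ (k-1) * Real.exp (-(r*y)))) := by
          apply intervalIntegral.integral_congr
          intro y hy
          rw [Set.uIcc_of_le hx.le] at hy
          simp only [hh, gammaPDFReal, if_pos hy.1,
            max_eq_left (by linarith [hy.2] : (0:ℝ) ≤ x - y)]
          ring
        rw [this, intervalIntegral.integral_const_mul, auxSub k r x hx]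

noncomputable def Phi (k r x v : ℝ) : ENNReal :=
  ENNReal.ofReal ((r ^ k / Real.Gamma k)^2 * x ^ (2*k) * Real.exp (-(r*x)) *
    ((1-v) * v ^ (k-1) * Real.exp (-(r*(x*v)))))

lemma measurable_Phi (k r : ℝ) : Measurable (fun z : ℝ × ℝ => Phi k r z.1 z.2) := by
  unfold Phi
  fun_prop

lemma inner_zero (k r x : ℝ) (hx : x ≤ 0) :
    ∫⁻ y, gammaPDF k r y * ENNReal.ofReal (x - y) = 0 := by
  have : ∀ y : ℝ, gammaPDF k r y * ENNReal.ofReal (x - y) = 0 := by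
    intro y
    rcases lt_or_ge y 0 with hy | hy
    · rw [gammaPDF_of_neg hy, zero_mul]
    · rw [ENNReal.ofReal_of_nonpos (by linarith), mul_zero]
  simp only [this, lintegral_zero]

lemma vInt (k c : ℝ) (hk : 0 < k) :
    IntervalIntegrable (fun v : ℝ => (1-v) * v ^ (k-1) * Real.exp (-(c*v))) volume 0 1 := by
  have h1 : IntervalIntegrable (fun v : ℝ => v ^ (k-1)) volume 0 1 :=
    intervalIntegral.intervalIntegrable_rpow' (by linarith)
  have h2 : ContinuousOn (fun v : ℝ => (1-v) * Real.exp (-(c*v))) (Set.uIcc 0 1) := by fun_prop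
  have h3 := h1.continuousOn_mul h2
  have heq : (fun v : ℝ => (1-v) * Real.exp (-(c*v)) * v ^ (k-1))
      = fun v : ℝ => (1-v) * v ^ (k-1) * Real.exp (-(c*v)) := by funext v; ring
  rwa [heq] at h3

lemma step7 (k r x : ℝ) (hk : 0 < k) (hr : 0 < r) (hx : 0 < x) :
    ENNReal.ofReal ((r ^ k / Real.Gamma k)^2 * x ^ (2*k) * Real.exp (-(r*x)) *
        ∫ v in (0:ℝ)..1, (1-v) * v ^ (k-1) * Real.exp (-(r*(x*v))))
      = ∫⁻ v in Ioo (0:ℝ) 1, Phi k r x v := by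
  set c : ℝ := (r ^ k / Real.Gamma k)^2 * x ^ (2*k) * Real.exp (-(r*x)) with hc
  have hcnn : 0 ≤ c := by positivity
  have hInt : IntegrableOn (fun v : ℝ => c * ((1-v) * v ^ (k-1) * Real.exp (-(r*(x*v)))))
      (Ioo 0 1) volume := by
    have h1 : IntegrableOn (fun v : ℝ => c * ((1-v) * v ^ (k-1) * Real.exp (-(r*(x*v)))))
        (Ioc 0 1) volume := by
      have h0 := (vInt k (r*x) hk).1
      have h2 : IntegrableOn (fun v : ℝ => (1-v) * v ^ (k-1) * Real.exp (-(r*(x*v))))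
          (Ioc 0 1) volume := by
        apply h0.congr_fun ?_ measurableSet_Ioc
        intro v hv
        simp only [mul_assoc]
      exact h2.const_mul c
    exact h1.mono_set Ioo_subset_Ioc_self
  have hnn : 0 ≤ᵐ[volume.restrict (Ioo (0:ℝ) 1)]
      fun v : ℝ => c * ((1-v) * v ^ (k-1) * Real.exp (-(r*(x*v)))) := by
    filter_upwards [ae_restrict_mem measurableSet_Ioo] with v hv
    have h1 : 0 ≤ 1 - v := by linarith [hv.2]
    have h2 : (0:ℝ) ≤ v ^ (k-1) := Real.rpow_nonneg hv.1.le _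
    positivity
  have key := ofReal_integral_eq_lintegral_ofReal hInt hnn
  calc ENNReal.ofReal (c * ∫ v in (0:ℝ)..1, (1-v) * v ^ (k-1) * Real.exp (-(r*(x*v))))
      = ENNReal.ofReal (∫ v in Ioo (0:ℝ) 1,
          c * ((1-v) * v ^ (k-1) * Real.exp (-(r*(x*v))))) := by
        rw [MeasureTheory.integral_const_mul, intervalIntegral.integral_of_le
          (by norm_num : (0:ℝ) ≤ 1), MeasureTheory.integral_Ioc_eq_integral_Ioo]
    _ = ∫⁻ v in Ioo (0:ℝ) 1, ENNReal.ofReal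
          (c * ((1-v) * v ^ (k-1) * Real.exp (-(r*(x*v))))) := key
    _ = ∫⁻ v in Ioo (0:ℝ) 1, Phi k r x v := by
        apply lintegral_congr
        intro v
        unfold Phi
        rw [hc]
lemma step9 (k r v : ℝ) (hk : 0 < k) (hr : 0 < r) (hv : v ∈ Ioo (0:ℝ) 1) :
    ∫⁻ x in Ioi (0:ℝ), Phi k r x v
      = ENNReal.ofReal ((r ^ k / Real.Gamma k)^2 * Real.Gamma (2*k+1) * (1/r)^(2*k+1) *
          ((1-v) * v ^ (k-1) * (1+v) ^ (-(2*k+1)))) := by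
  obtain ⟨hv0, hv1⟩ := hv
  have h1v : (0:ℝ) < 1 + v := by linarith
  have hb : (0:ℝ) < r * (1+v) := by positivity
  set d : ℝ := (r ^ k / Real.Gamma k)^2 * ((1-v) * v ^ (k-1)) with hd
  have hdnn : 0 ≤ d := by
    have h2 : (0:ℝ) ≤ v ^ (k-1) := Real.rpow_nonneg hv0.le _
    have h3 : (0:ℝ) ≤ 1 - v := by linarith
    positivity
  have hcong : ∀ x ∈ Ioi (0:ℝ), Phi k r x v
      = ENNReal.ofReal (d * (x ^ (2*k+1-1) * Real.exp (-((r*(1+v))*x)))) := by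
    intro x hx
    unfold Phi
    congr 1
    rw [show (2*k+1-1 : ℝ) = 2*k by ring,
      show -(r*(1+v)*x) = -(r*x) + -(r*(x*v)) by ring, Real.exp_add, hd]
    ring
  rw [setLIntegral_congr_fun measurableSet_Ioi hcong]
  have hInt : IntegrableOn (fun x : ℝ => d * (x ^ (2*k+1-1) * Real.exp (-((r*(1+v))*x))))
      (Ioi 0) volume := (auxI1 (2*k+1) (r*(1+v)) (by linarith) hb).const_mul d
  have hnn : 0 ≤ᵐ[volume.restrict (Ioi (0:ℝ))]
      fun x : ℝ => d * (x ^ (2*k+1-1) * Real.exp (-((r*(1+v))*x))) := by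
    filter_upwards [ae_restrict_mem measurableSet_Ioi] with x hx
    have : (0:ℝ) ≤ x ^ (2*k+1-1) := Real.rpow_nonneg (le_of_lt hx) _
    positivity
  rw [← ofReal_integral_eq_lintegral_ofReal hInt hnn, MeasureTheory.integral_const_mul,
    Real.integral_rpow_mul_exp_neg_mul_Ioi (by linarith : (0:ℝ) < 2*k+1) hb]
  congr 1
  have hsplit : (1/(r*(1+v))) ^ (2*k+1) = (1/r) ^ (2*k+1) * (1+v) ^ (-(2*k+1)) := by
    rw [one_div, mul_inv, Real.mul_rpow (by positivity) (by positivity),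
      Real.inv_rpow h1v.le, ← Real.rpow_neg h1v.le, one_div]
  rw [hsplit, hd]
  ring

lemma wInt (k : ℝ) (hk : 0 < k) :
    IntervalIntegrable (fun v : ℝ => (1-v) * v ^ (k-1) * (1+v) ^ (-(2*k+1))) volume 0 1 := by
  have h1 : IntervalIntegrable (fun v : ℝ => v ^ (k-1)) volume 0 1 :=
    intervalIntegral.intervalIntegrable_rpow' (by linarith)
  have h2 : ContinuousOn (fun v : ℝ => (1-v) * (1+v) ^ (-(2*k+1))) (Set.uIcc 0 1) := by
    apply ContinuousOn.mul (by fun_prop)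
    intro v hv
    apply ContinuousWithinAt.rpow_const ((continuous_const.add continuous_id).continuousWithinAt)
    left; intro h
    rw [Set.uIcc_of_le (by norm_num : (0:ℝ) ≤ 1)] at hv
    have := hv.1; simp only [Pi.add_apply, id] at h; nlinarith
  have h3 := h1.continuousOn_mul h2
  have heq : (fun v : ℝ => (1-v) * (1+v) ^ (-(2*k+1)) * v ^ (k-1))
      = fun v : ℝ => (1-v) * v ^ (k-1) * (1+v) ^ (-(2*k+1)) := by funext v; ring
  rwa [heq] at h3

lemma stepA_final (k r : ℝ) (hk : 0 < k) (hr : 0 < r) :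
    ∫⁻ v in Ioo (0:ℝ) 1, ENNReal.ofReal ((r ^ k / Real.Gamma k)^2 * Real.Gamma (2*k+1) *
        (1/r)^(2*k+1) * ((1-v) * v ^ (k-1) * (1+v) ^ (-(2*k+1))))
      = ENNReal.ofReal ((r ^ k / Real.Gamma k)^2 * Real.Gamma (2*k+1) * (1/r)^(2*k+1) *
          ((4:ℝ)^(-k)/k)) := by
  set E : ℝ := (r ^ k / Real.Gamma k)^2 * Real.Gamma (2*k+1) * (1/r)^(2*k+1) with hE
  have hEnn : 0 ≤ E := by positivity
  have hInt : IntegrableOn (fun v : ℝ => E * ((1-v) * v ^ (k-1) * (1+v) ^ (-(2*k+1))))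
      (Ioo 0 1) volume := by
    have h1 : IntegrableOn (fun v : ℝ => E * ((1-v) * v ^ (k-1) * (1+v) ^ (-(2*k+1))))
        (Ioc 0 1) volume := (wInt k hk).1.const_mul E
    exact h1.mono_set Ioo_subset_Ioc_self
  have hnn : 0 ≤ᵐ[volume.restrict (Ioo (0:ℝ) 1)]
      fun v : ℝ => E * ((1-v) * v ^ (k-1) * (1+v) ^ (-(2*k+1))) := by
    filter_upwards [ae_restrict_mem measurableSet_Ioo] with v hv
    have h1 : 0 ≤ 1 - v := by linarith [hv.2]
    have h2 : (0:ℝ) ≤ v ^ (k-1) := Real.rpow_nonneg hv.1.le _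
    have h3 : (0:ℝ) ≤ (1+v) ^ (-(2*k+1)) := Real.rpow_nonneg (by linarith [hv.1] : (0:ℝ) ≤ 1+v) _
    positivity
  rw [← ofReal_integral_eq_lintegral_ofReal hInt hnn, MeasureTheory.integral_const_mul,
    ← MeasureTheory.integral_Ioc_eq_integral_Ioo,
    ← intervalIntegral.integral_of_le (by norm_num : (0:ℝ) ≤ 1), auxJ k hk]

lemma lintA (k r : ℝ) (hk : 0 < k) (hr : 0 < r) :
    ∫⁻ x, gammaPDF k r x * ∫⁻ y, gammaPDF k r y * ENNReal.ofReal (x - y)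
      = ENNReal.ofReal ((r ^ k / Real.Gamma k)^2 * Real.Gamma (2*k+1) * (1/r)^(2*k+1) *
          ((4:ℝ)^(-k)/k)) := by
  have h6 : ∀ x : ℝ, gammaPDF k r x * ∫⁻ y, gammaPDF k r y * ENNReal.ofReal (x - y)
      = (Ioi (0:ℝ)).indicator (fun x => ∫⁻ v in Ioo (0:ℝ) 1, Phi k r x v) x := by
    intro x
    rcases le_or_gt x 0 with hx | hx
    · rw [inner_zero k r x hx, mul_zero,
        Set.indicator_of_notMem (by simpa using hx)]
    · rw [Set.indicator_of_mem (Set.mem_Ioi.mpr hx), inner_pos k r x hk hr hx,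
        ← step7 k r x hk hr hx, gammaPDF_of_nonneg hx.le]
      set J : ℝ := ∫ v in (0:ℝ)..1, (1-v) * v ^ (k-1) * Real.exp (-(r*(x*v))) with hJ
      have hpdf : 0 ≤ r ^ k / Real.Gamma k * x ^ (k-1) * Real.exp (-(r*x)) := by
        have h0 : (0:ℝ) ≤ x ^ (k-1) := Real.rpow_nonneg hx.le _
        have h1 : (0:ℝ) < Real.Gamma k := Real.Gamma_pos_of_pos hk
        positivity
      rw [← ENNReal.ofReal_mul hpdf]
      congr 1
      have hxx : x ^ (k-1) * x ^ (k+1) = x ^ (2*k) := by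
        rw [← Real.rpow_add hx]; ring_nf
      calc r ^ k / Real.Gamma k * x ^ (k-1) * Real.exp (-(r*x)) *
            (r ^ k / Real.Gamma k * (x ^ (k+1) * J))
          = (r ^ k / Real.Gamma k)^2 * (x ^ (k-1) * x ^ (k+1)) * Real.exp (-(r*x)) * J := by
            ring
        _ = (r ^ k / Real.Gamma k)^2 * x ^ (2*k) * Real.exp (-(r*x)) * J := by rw [hxx]
  rw [lintegral_congr h6, lintegral_indicator measurableSet_Ioi,
    lintegral_lintegral_swap (measurable_Phi k r).aemeasurable]
  rw [setLIntegral_congr_fun measurableSet_Ioo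
    (fun v hv => step9 k r v hk hr hv)]
  exact stepA_final k r hk hr

lemma habs_split (x y : ℝ) :
    ENNReal.ofReal |x - y| = ENNReal.ofReal (x - y) + ENNReal.ofReal (y - x) := by
  rcases le_total y x with h | h
  · rw [abs_of_nonneg (by linarith : (0:ℝ) ≤ x - y),
      ENNReal.ofReal_of_nonpos (show y - x ≤ 0 by linarith), add_zero]
  · rw [abs_of_nonpos (by linarith), ENNReal.ofReal_of_nonpos (by linarith : x - y ≤ 0),
      zero_add, neg_sub]

lemma gammaAbs (k r : ℝ) (hk : 0 < k) (hr : 0 < r) :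
    ∫ p : ℝ × ℝ, |p.1 - p.2| ∂((gammaMeasure k r).prod (gammaMeasure k r))
      = 2 * ((r ^ k / Real.Gamma k)^2 * Real.Gamma (2*k+1) * (1/r)^(2*k+1) *
          ((4:ℝ)^(-k)/k)) := by
  haveI : IsProbabilityMeasure (gammaMeasure k r) := isProbabilityMeasure_gammaMeasure hk hr
  haveI : IsProbabilityMeasure (volume.withDensity (gammaPDF k r)) :=
    isProbabilityMeasure_gammaMeasure hk hr
  have hG : Measurable (gammaPDF k r) := (measurable_gammaPDFReal k r).ennreal_ofReal
  have hmf : Measurable fun p : ℝ × ℝ => ENNReal.ofReal |p.1 - p.2| :=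
    ((measurable_fst.sub measurable_snd).abs).ennreal_ofReal
  have hsm : AEStronglyMeasurable (fun p : ℝ × ℝ => |p.1 - p.2|)
      ((gammaMeasure k r).prod (gammaMeasure k r)) :=
    (continuous_abs.comp (continuous_fst.sub continuous_snd)).aestronglyMeasurable
  rw [integral_eq_lintegral_of_nonneg_ae (ae_of_all _ fun p => abs_nonneg _) hsm]
  have hmeasm : ∀ x : ℝ, Measurable fun y : ℝ => gammaPDF k r y * ENNReal.ofReal (x - y) :=
    fun x => (hG.mul ((measurable_const.sub measurable_id).ennreal_ofReal))
  have hm1 : Measurable fun x : ℝ => ∫⁻ y, gammaPDF k r y * ENNReal.ofReal (x - y) := by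
    apply Measurable.lintegral_prod_right (f := fun x y => gammaPDF k r y * ENNReal.ofReal (x - y))
    exact (hG.comp measurable_snd).mul ((measurable_fst.sub measurable_snd).ennreal_ofReal)
  have hm2 : Measurable fun x : ℝ => ∫⁻ y, gammaPDF k r y * ENNReal.ofReal (y - x) := by
    apply Measurable.lintegral_prod_right (f := fun x y => gammaPDF k r y * ENNReal.ofReal (y - x))
    exact (hG.comp measurable_snd).mul ((measurable_snd.sub measurable_fst).ennreal_ofReal)
  have hL : ∫⁻ p : ℝ × ℝ, ENNReal.ofReal |p.1 - p.2|
        ∂((gammaMeasure k r).prod (gammaMeasure k r))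
      = ENNReal.ofReal (2 * ((r ^ k / Real.Gamma k)^2 * Real.Gamma (2*k+1) * (1/r)^(2*k+1) *
          ((4:ℝ)^(-k)/k))) := by
    rw [lintegral_prod _ hmf.aemeasurable]
    simp only [gammaMeasure]
    rw [lintegral_withDensity_eq_lintegral_mul _ hG (by
      apply Measurable.lintegral_prod_right
        (f := fun x y => ENNReal.ofReal |x - y|)
      exact (measurable_fst.sub measurable_snd).abs.ennreal_ofReal)]
    have hstep : ∀ x : ℝ,
        (gammaPDF k r * fun x => ∫⁻ y, ENNReal.ofReal |x - y| ∂(volume.withDensity (gammaPDF k r))) x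
          = gammaPDF k r x * (∫⁻ y, gammaPDF k r y * ENNReal.ofReal (x - y))
            + gammaPDF k r x * ∫⁻ y, gammaPDF k r y * ENNReal.ofReal (y - x) := by
      intro x
      simp only [Pi.mul_apply]
      have hfx : Measurable fun y : ℝ => ENNReal.ofReal |x - y| :=
        ((measurable_const.sub measurable_id).abs).ennreal_ofReal
      rw [lintegral_withDensity_eq_lintegral_mul _ hG hfx]
      have : ∀ y : ℝ, (gammaPDF k r * fun y => ENNReal.ofReal |x - y|) y
          = gammaPDF k r y * ENNReal.ofReal (x - y) + gammaPDF k r y * ENNReal.ofReal (y - x) := by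
        intro y
        simp only [Pi.mul_apply]
        rw [habs_split, mul_add]
      rw [lintegral_congr this, lintegral_add_left (hmeasm x), mul_add]
    rw [lintegral_congr hstep, lintegral_add_left (show Measurable fun x => gammaPDF k r x * ∫⁻ y, gammaPDF k r y * ENNReal.ofReal (x - y) from hG.mul hm1)]
    have hBA : (∫⁻ x, gammaPDF k r x * ∫⁻ y, gammaPDF k r y * ENNReal.ofReal (y - x))
        = ∫⁻ x, gammaPDF k r x * ∫⁻ y, gammaPDF k r y * ENNReal.ofReal (x - y) := by
      calc (∫⁻ x, gammaPDF k r x * ∫⁻ y, gammaPDF k r y * ENNReal.ofReal (y - x))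
          = ∫⁻ x, ∫⁻ y, gammaPDF k r x * (gammaPDF k r y * ENNReal.ofReal (y - x)) := by
            exact lintegral_congr fun x => (lintegral_const_mul' _ _ ENNReal.ofReal_ne_top).symm
        _ = ∫⁻ y, ∫⁻ x, gammaPDF k r x * (gammaPDF k r y * ENNReal.ofReal (y - x)) := by
            apply lintegral_lintegral_swap
            exact (((hG.comp measurable_fst).mul ((hG.comp measurable_snd).mul
              ((measurable_snd.sub measurable_fst).ennreal_ofReal)))).aemeasurable
        _ = ∫⁻ y, gammaPDF k r y * ∫⁻ x, gammaPDF k r x * ENNReal.ofReal (y - x) := by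
            refine lintegral_congr fun y => ?_
            have hnetop : gammaPDF k r y ≠ ⊤ := ENNReal.ofReal_ne_top
            rw [← lintegral_const_mul' _ _ hnetop]
            exact lintegral_congr fun x => by ring
    rw [hBA, lintA k r hk hr, ← two_mul, ← ENNReal.ofReal_ofNat 2,
      ← ENNReal.ofReal_mul (by norm_num)]
  rw [hL, ENNReal.toReal_ofReal]
  have h4 : (0:ℝ) ≤ (4:ℝ) ^ (-k) := Real.rpow_nonneg (by norm_num) _
  have hGk : (0:ℝ) < Real.Gamma k := Real.Gamma_pos_of_pos hk
  have hG2 : (0:ℝ) < Real.Gamma (2*k+1) := Real.Gamma_pos_of_pos (by linarith)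
  positivity

lemma alg (k r : ℝ) (hk : 0 < k) (hr : 0 < r) :
    2 * ((r ^ k / Real.Gamma k)^2 * Real.Gamma (2*k+1) * (1/r)^(2*k+1) * ((4:ℝ)^(-k)/k))
      = 2 * Real.Gamma (k + 1/2) / (Real.sqrt π * Real.Gamma k * r) := by
  have hGk : (0:ℝ) < Real.Gamma k := Real.Gamma_pos_of_pos hk
  have hS : (0:ℝ) < Real.sqrt π := Real.sqrt_pos.mpr Real.pi_pos
  have hH : (0:ℝ) < Real.Gamma (k + 1/2) := Real.Gamma_pos_of_pos (by linarith)
  have hG2k1 : Real.Gamma (2*k+1) = (2*k) * Real.Gamma (2*k) :=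
    Real.Gamma_add_one (by positivity)
  have hdup := Real.Gamma_mul_Gamma_add_half k
  have key1 : (r^k)^2 * (1/r)^(2*k+1) = 1/r := by
    rw [sq, ← Real.rpow_add hr, one_div, Real.inv_rpow hr.le, ← Real.rpow_neg hr.le,
      ← Real.rpow_add hr, show k + k + -(2*k+1) = (-1:ℝ) by ring, Real.rpow_neg_one]
  have key2 : (4:ℝ)^(-k) = (2:ℝ)^(-(2*k)) := by
    rw [show (4:ℝ) = (2:ℝ)^(2:ℝ) by
        rw [show (2:ℝ) = ((2:ℕ):ℝ) by norm_num, Real.rpow_natCast]; norm_num,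
      ← Real.rpow_mul (by norm_num : (0:ℝ) ≤ 2), show (2:ℝ)*(-k) = -(2*k) by ring]
  have hT : (0:ℝ) < (2:ℝ)^(-(2*k)) := Real.rpow_pos_of_pos (by norm_num) _
  have key3 : (2:ℝ)^(1-2*k) = (2:ℝ)^(-(2*k)) * 2 := by
    rw [show (1-2*k : ℝ) = -(2*k)+1 by ring, Real.rpow_add (by norm_num : (0:ℝ) < 2),
      Real.rpow_one]
  have hΓ2k : Real.Gamma (2*k) = Real.Gamma k * Real.Gamma (k+1/2) /
      ((2:ℝ)^(1-2*k) * Real.sqrt π) := by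
    rw [eq_div_iff (by positivity)]
    linear_combination -hdup
  have rearr : 2 * ((r ^ k / Real.Gamma k)^2 * Real.Gamma (2*k+1) * (1/r)^(2*k+1) *
        ((4:ℝ)^(-k)/k))
      = ((r^k)^2 * (1/r)^(2*k+1)) * (2 * Real.Gamma (2*k+1) * (4:ℝ)^(-k) /
          (Real.Gamma k^2 * k)) := by
    rw [div_pow]; ring
  rw [rearr, key1, key2, hG2k1, hΓ2k, key3]
  field_simp

/-- For independent `G₁, G₂` gamma distributed with shape `1/n` and scale `λ`
(rate `1/λ`), `E|G₁ - G₂| = 2λ / B(1/2, 1/n)`, where `B` is the beta function. -/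
theorem abs_gamma_diff_mean (n : ℕ) (hn : 1 ≤ n) (lam : ℝ) (hlam : 0 < lam) :
    ∫ p : ℝ × ℝ, |p.1 - p.2|
        ∂((gammaMeasure (1 / (n : ℝ)) (1 / lam)).prod (gammaMeasure (1 / (n : ℝ)) (1 / lam)))
      = 2 * lam /
          (Real.Gamma (1 / 2) * Real.Gamma (1 / (n : ℝ)) / Real.Gamma (1 / 2 + 1 / (n : ℝ))) := by
  have hn0 : (0:ℝ) < (n:ℝ) := by exact_mod_cast Nat.pos_of_ne_zero (by omega)
  have hk : (0:ℝ) < 1 / (n:ℝ) := by positivity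
  have hr : (0:ℝ) < 1 / lam := by positivity
  rw [gammaAbs _ _ hk hr, alg _ _ hk hr, Real.Gamma_one_half_eq,
    add_comm (1/2 : ℝ) (1/(n:ℝ))]
  have hGk : (0:ℝ) < Real.Gamma (1/(n:ℝ)) := Real.Gamma_pos_of_pos hk
  have hS : (0:ℝ) < Real.sqrt π := Real.sqrt_pos.mpr Real.pi_pos
  have hH : (0:ℝ) < Real.Gamma (1/(n:ℝ) + 1/2) := Real.Gamma_pos_of_pos (by positivity)
  field_simp
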